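/- Let W : Fin n → Fin n → ℝ≥0 have row sum i equal to column sum i, both equal to an integer u_i, for every i. Then there exists W* : Fin n → Fin n → ℕ with W*_{ij} ≤ ⌈W_{ij}⌉ and W*_{ij} ≥ ⌊W_{ij}⌋ for all i, j, such that every row sum and the corresponding column sum of W* both equal u_i. -/

import Mathlib

open Finset Module

def IsIntR (x : ℝ) : Prop := ∃ m : ℤ, x = (m : ℝ)

lemma isIntR_sum {α : Type*} (s : Finset α) (f : α → ℝ)
    (h : ∀ a ∈ s, IsIntR (f a)) : IsIntR (∑ a ∈ s, f a) := by
  classical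
  induction s using Finset.induction with
  | empty => exact ⟨0, by simp⟩
  | @insert a s hx ih =>
    obtain ⟨m, hm⟩ := h a (mem_insert_self a s)
    obtain ⟨m', hm'⟩ := ih fun b hb => h b (mem_insert_of_mem hb)
    exact ⟨m + m', by rw [Finset.sum_insert hx, hm, hm']; push_cast; ring⟩

lemma exists_other_frac {α : Type*} [Fintype α] [DecidableEq α]
    (f : α → ℝ) (m : ℤ) (hsum : ∑ j, f j = (m : ℝ)) {j0 : α} (hj0 : ¬ IsIntR (f j0)) :
    ∃ j1, j1 ≠ j0 ∧ ¬ IsIntR (f j1) := by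
  by_contra h
  push_neg at h
  have hint : IsIntR (∑ j ∈ univ.erase j0, f j) :=
    isIntR_sum _ _ fun a ha => h a (mem_erase.mp ha).1
  obtain ⟨m', hm'⟩ := hint
  apply hj0
  have : f j0 = (m : ℝ) - (m' : ℝ) := by
    rw [← hsum, ← hm', ← Finset.add_sum_erase _ f (mem_univ j0)]; ring
  exact ⟨m - m', by rw [this]; push_cast; ring⟩

lemma card_ge_two_mul {β : Type*} [DecidableEq β] (F : Finset β) {γ : Type*} [DecidableEq γ]
    (f : β → γ) (h2 : ∀ c ∈ F, ∃ c' ∈ F, f c' = f c ∧ c' ≠ c) :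
    2 * (F.image f).card ≤ F.card := by
  rw [Finset.card_eq_sum_card_fiberwise (fun x hx => Finset.mem_image_of_mem f hx)]
  have : 2 * (F.image f).card = ∑ _b ∈ F.image f, 2 := by
    rw [Finset.sum_const]; ring
  rw [this]
  apply Finset.sum_le_sum
  intro b hb
  obtain ⟨c, hc, hfc⟩ := Finset.mem_image.mp hb
  obtain ⟨c', hc', hfc', hne⟩ := h2 c hc
  have : 1 < (F.filter (fun a => f a = b)).card := by
    rw [Finset.one_lt_card]
    exact ⟨c, Finset.mem_filter.mpr ⟨hc, hfc⟩, c',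
      Finset.mem_filter.mpr ⟨hc', by rw [hfc', hfc]⟩, fun h => hne h.symm⟩
  omega

noncomputable def sumIfL {n : ℕ} (F : Finset (Fin n × Fin n)) (p : Fin n × Fin n → Prop)
    [DecidablePred p] : (↥F → ℝ) →ₗ[ℝ] ℝ where
  toFun Z := ∑ c : ↥F, if p c then Z c else 0
  map_add' x y := by
    rw [← Finset.sum_add_distrib]
    exact Finset.sum_congr rfl fun c _ => by split <;> simp
  map_smul' r x := by
    simp only [Pi.smul_apply, smul_eq_mul, RingHom.id_apply]
    rw [Finset.mul_sum]
    exact Finset.sum_congr rfl fun c _ => by split <;> simp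

noncomputable def sumL (ι : Type*) [Fintype ι] : (ι → ℝ) →ₗ[ℝ] ℝ where
  toFun x := ∑ i, x i
  map_add' x y := by rw [← Finset.sum_add_distrib]; rfl
  map_smul' r x := by
    simp only [Pi.smul_apply, smul_eq_mul, RingHom.id_apply]
    rw [Finset.mul_sum]

lemma exists_kernel {n : ℕ} (F : Finset (Fin n × Fin n)) (hne : F.Nonempty)
    (hcard : (F.image Prod.fst).card + (F.image Prod.snd).card ≤ F.card) :
    ∃ Z : ↥F → ℝ, Z ≠ 0 ∧
      (∀ i, ∑ c : ↥F, (if (c : Fin n × Fin n).1 = i then Z c else 0) = 0) ∧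
      (∀ j, ∑ c : ↥F, (if (c : Fin n × Fin n).2 = j then Z c else 0) = 0) := by
  classical
  set R := F.image Prod.fst with hR
  set C := F.image Prod.snd with hC
  have hRne : R.Nonempty := hne.image _
  let T : (↥F → ℝ) →ₗ[ℝ] ((↥R → ℝ) × (↥C → ℝ)) :=
    LinearMap.prod (LinearMap.pi fun r => sumIfL F (fun p => p.1 = ↑r))
                   (LinearMap.pi fun c => sumIfL F (fun p => p.2 = ↑c))
  let L : ((↥R → ℝ) × (↥C → ℝ)) →ₗ[ℝ] ℝ :=
    (sumL ↥R).comp (LinearMap.fst ℝ _ _) - (sumL ↥C).comp (LinearMap.snd ℝ _ _)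
  have hLsurj : Function.Surjective L := by
    intro y
    refine ⟨((fun _ => y / R.card), 0), ?_⟩
    have hRcard : (R.card : ℝ) ≠ 0 :=
      Nat.cast_ne_zero.mpr (Finset.card_pos.mpr hRne).ne'
    simp only [L, LinearMap.sub_apply, LinearMap.comp_apply, LinearMap.fst_apply,
      LinearMap.snd_apply, sumL, LinearMap.coe_mk, AddHom.coe_mk, Pi.zero_apply,
      Finset.sum_const_zero, sub_zero, Finset.sum_const, smul_eq_mul, Finset.card_univ,
      Fintype.card_coe]
    field_simp
    rw [nsmul_eq_mul]; field_simp
  have hrange : LinearMap.range T ≤ LinearMap.ker L := by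
    rintro x ⟨Z, rfl⟩
    simp only [LinearMap.mem_ker, L, LinearMap.sub_apply, LinearMap.comp_apply,
      LinearMap.fst_apply, LinearMap.snd_apply, T, LinearMap.prod_apply, Function.prod,
      sumL, LinearMap.coe_mk, AddHom.coe_mk, LinearMap.pi_apply, sumIfL, sub_eq_zero]
    have key1 : ∑ r : ↥R, ∑ c : ↥F, (if (c : Fin n × Fin n).1 = ↑r then Z c else 0)
        = ∑ c : ↥F, Z c := by
      rw [Finset.sum_comm]
      refine Finset.sum_congr rfl fun c _ => ?_
      refine Finset.sum_eq_single_of_mem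
        (⟨(c : Fin n × Fin n).1, Finset.mem_image_of_mem _ c.2⟩ : ↥R) (mem_univ _) ?_ |>.trans ?_
      · intro b _ hb
        rw [if_neg]
        exact fun h => hb (Subtype.ext h.symm)
      · rw [if_pos rfl]
    have key2 : ∑ r : ↥C, ∑ c : ↥F, (if (c : Fin n × Fin n).2 = ↑r then Z c else 0)
        = ∑ c : ↥F, Z c := by
      rw [Finset.sum_comm]
      refine Finset.sum_congr rfl fun c _ => ?_
      refine Finset.sum_eq_single_of_mem
        (⟨(c : Fin n × Fin n).2, Finset.mem_image_of_mem _ c.2⟩ : ↥C) (mem_univ _) ?_ |>.trans ?_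
      · intro b _ hb
        rw [if_neg]
        exact fun h => hb (Subtype.ext h.symm)
      · rw [if_pos rfl]
    rw [key1, key2]
  have hrankL : finrank ℝ (LinearMap.ker L) + 1 = R.card + C.card := by
    have h1 := LinearMap.finrank_range_add_finrank_ker L
    rw [LinearMap.range_eq_top.mpr hLsurj] at h1
    rw [finrank_top, finrank_self] at h1
    rw [Module.finrank_prod, finrank_fintype_fun_eq_card, finrank_fintype_fun_eq_card,
      Fintype.card_coe, Fintype.card_coe] at h1
    omega
  have hrankT := LinearMap.finrank_range_add_finrank_ker T
  rw [finrank_fintype_fun_eq_card, Fintype.card_coe] at hrankT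
  have hle : finrank ℝ (LinearMap.range T) ≤ finrank ℝ (LinearMap.ker L) :=
    Submodule.finrank_mono hrange
  have hkerpos : 0 < finrank ℝ (LinearMap.ker T) := by omega
  have hbt : LinearMap.ker T ≠ ⊥ := by
    intro h
    rw [h, finrank_bot] at hkerpos
    omega
  obtain ⟨Z, hZmem, hZne⟩ := (Submodule.ne_bot_iff _).mp hbt
  refine ⟨Z, hZne, ?_, ?_⟩
  · intro i
    by_cases hi : i ∈ R
    · have := congrFun (congrArg Prod.fst (LinearMap.mem_ker.mp hZmem)) ⟨i, hi⟩
      simpa [T, sumIfL, LinearMap.pi_apply] using this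
    · refine Finset.sum_eq_zero fun c _ => ?_
      rw [if_neg]
      intro h
      exact hi (h ▸ Finset.mem_image_of_mem _ c.2)
  · intro j
    by_cases hj : j ∈ C
    · have := congrFun (congrArg Prod.snd (LinearMap.mem_ker.mp hZmem)) ⟨j, hj⟩
      simpa [T, sumIfL, LinearMap.pi_apply] using this
    · refine Finset.sum_eq_zero fun c _ => ?_
      rw [if_neg]
      intro h
      exact hj (h ▸ Finset.mem_image_of_mem _ c.2)

open scoped Classical in
lemma key_induction {n : ℕ} (k : ℕ) : ∀ (W : Fin n → Fin n → ℝ) (u : Fin n → ℤ),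
    (∀ i j, 0 ≤ W i j) → (∀ i, ∑ j, W i j = (u i : ℝ)) → (∀ i, ∑ l, W l i = (u i : ℝ)) →
    (univ.filter (fun c : Fin n × Fin n => ¬ IsIntR (W c.1 c.2))).card ≤ k →
    ∃ Wstar : Fin n → Fin n → ℕ,
      (∀ i j, ((Wstar i j : ℤ) ≤ ⌈W i j⌉ ∧ ⌊W i j⌋ ≤ (Wstar i j : ℤ))) ∧
      (∀ i, ∑ j, (Wstar i j : ℝ) = (u i : ℝ)) ∧
      (∀ i, ∑ l, (Wstar l i : ℝ) = (u i : ℝ)) := by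
  induction k with
  | zero =>
    intro W u hnonneg hrow hcol hcard
    have hall : ∀ i j, IsIntR (W i j) := by
      intro i j
      by_contra h
      have : ((i, j) : Fin n × Fin n) ∈ univ.filter
          (fun c : Fin n × Fin n => ¬ IsIntR (W c.1 c.2)) := mem_filter.mpr ⟨mem_univ _, h⟩
      have := Finset.card_pos.mpr ⟨_, this⟩
      omega
    have hfloor : ∀ i j, ((⌊W i j⌋ : ℝ)) = W i j := by
      intro i j
      obtain ⟨m, hm⟩ := hall i j
      rw [hm, Int.floor_intCast]
    refine ⟨fun i j => (⌊W i j⌋).toNat, ?_, ?_, ?_⟩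
    · intro i j
      have hnn : 0 ≤ ⌊W i j⌋ := Int.floor_nonneg.mpr (hnonneg i j)
      rw [Int.toNat_of_nonneg hnn]
      exact ⟨Int.floor_le_ceil _, le_refl _⟩
    · intro i
      rw [← hrow i]
      refine Finset.sum_congr rfl fun j _ => ?_
      rw [← hfloor i j]
      norm_cast
      exact Int.toNat_of_nonneg (Int.floor_nonneg.mpr (hnonneg i j))
    · intro i
      rw [← hcol i]
      refine Finset.sum_congr rfl fun l _ => ?_
      rw [← hfloor l i]
      norm_cast
      exact Int.toNat_of_nonneg (Int.floor_nonneg.mpr (hnonneg l i))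
  | succ k ih =>
    intro W u hnonneg hrow hcol hcard
    by_cases hk : (univ.filter (fun c : Fin n × Fin n => ¬ IsIntR (W c.1 c.2))).card ≤ k
    · exact ih W u hnonneg hrow hcol hk
    set F := univ.filter (fun c : Fin n × Fin n => ¬ IsIntR (W c.1 c.2)) with hF
    have hFcard : F.card = k + 1 := by omega
    have hFne : F.Nonempty := Finset.card_pos.mp (by omega)
    have hmemF : ∀ p : Fin n × Fin n, p ∈ F ↔ ¬ IsIntR (W p.1 p.2) := by
      intro p; simp [hF]
    -- each row/column meeting F meets it at least twice
    have hrow2 : ∀ c ∈ F, ∃ c' ∈ F, c'.1 = c.1 ∧ c' ≠ c := by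
      intro c hc
      obtain ⟨j1, hj1ne, hj1⟩ := exists_other_frac (fun j => W c.1 j) (u c.1)
        (hrow c.1) ((hmemF c).mp hc)
      exact ⟨(c.1, j1), (hmemF _).mpr hj1, rfl, fun h => hj1ne (congrArg Prod.snd h)⟩
    have hcol2 : ∀ c ∈ F, ∃ c' ∈ F, c'.2 = c.2 ∧ c' ≠ c := by
      intro c hc
      obtain ⟨i1, hi1ne, hi1⟩ := exists_other_frac (fun l => W l c.2) (u c.2)
        (hcol c.2) ((hmemF c).mp hc)
      exact ⟨(i1, c.2), (hmemF _).mpr hi1, rfl, fun h => hi1ne (congrArg Prod.fst h)⟩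
    have h2R := card_ge_two_mul F Prod.fst hrow2
    have h2C := card_ge_two_mul F Prod.snd hcol2
    have hRC : (F.image Prod.fst).card + (F.image Prod.snd).card ≤ F.card := by omega
    obtain ⟨Z, hZne, hZrow, hZcol⟩ := exists_kernel F hFne hRC
    -- extend Z to the whole matrix
    set g : Fin n × Fin n → ℝ := fun p => if h : p ∈ F then Z ⟨p, h⟩ else 0 with hg
    have hgF : ∀ p, g p ≠ 0 → p ∈ F := by
      intro p h
      by_contra hp
      exact h (dif_neg hp)
    have hgZ : ∀ c : ↥F, g ↑c = Z c := fun c => dif_pos c.2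
    have hgrow : ∀ i, ∑ j, g (i, j) = 0 := by
      intro i
      have inner : ∀ a, (if a = i then (∑ b, g (a, b)) else 0)
          = ∑ b, (if a = i then g (a, b) else 0) := fun a => by split <;> simp
      calc ∑ j, g (i, j)
          = ∑ a, (if a = i then (∑ b, g (a, b)) else 0) := by
            rw [Finset.sum_ite_eq' univ i (fun a => ∑ b, g (a, b)), if_pos (mem_univ i)]
        _ = ∑ a, ∑ b, (if a = i then g (a, b) else 0) :=
            Finset.sum_congr rfl fun a _ => inner a
        _ = ∑ p ∈ univ ×ˢ univ, (if p.1 = i then g p else 0) := by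
            rw [Finset.sum_product]
        _ = ∑ p ∈ F, (if p.1 = i then g p else 0) := by
            refine (Finset.sum_subset (fun p _ => by simp) ?_).symm
            intro p _ hp
            simp [hg, hp]
        _ = ∑ c : ↥F, (if (c : Fin n × Fin n).1 = i then Z c else 0) := by
            rw [Finset.univ_eq_attach, ← Finset.sum_attach F (fun p => if p.1 = i then g p else 0)]
            exact Finset.sum_congr rfl fun c _ => by rw [hgZ]
        _ = 0 := hZrow i
    have hgcol : ∀ j, ∑ l, g (l, j) = 0 := by
      intro j
      have inner : ∀ a, (if a = j then (∑ b, g (b, a)) else 0)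
          = ∑ b, (if a = j then g (b, a) else 0) := fun a => by split <;> simp
      calc ∑ l, g (l, j)
          = ∑ a, (if a = j then (∑ b, g (b, a)) else 0) := by
            rw [Finset.sum_ite_eq' univ j (fun a => ∑ b, g (b, a)), if_pos (mem_univ j)]
        _ = ∑ a, ∑ b, (if a = j then g (b, a) else 0) :=
            Finset.sum_congr rfl fun a _ => inner a
        _ = ∑ p ∈ univ ×ˢ univ, (if p.2 = j then g p else 0) := by
            rw [Finset.sum_product_right]
        _ = ∑ p ∈ F, (if p.2 = j then g p else 0) := by
            refine (Finset.sum_subset (fun p _ => by simp) ?_).symm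
            intro p _ hp
            simp [hg, hp]
        _ = ∑ c : ↥F, (if (c : Fin n × Fin n).2 = j then Z c else 0) := by
            rw [Finset.univ_eq_attach, ← Finset.sum_attach F (fun p => if p.2 = j then g p else 0)]
            exact Finset.sum_congr rfl fun c _ => by rw [hgZ]
        _ = 0 := hZcol j
    -- the set of cells where g is nonzero
    obtain ⟨c0, hc0⟩ := Function.ne_iff.mp hZne
    set S := F.filter (fun p => g p ≠ 0) with hS
    have hSne : S.Nonempty := ⟨↑c0, mem_filter.mpr ⟨c0.2, by rw [hgZ]; simpa using hc0⟩⟩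
    have hSF : ∀ p ∈ S, p ∈ F := fun p hp => (mem_filter.mp hp).1
    -- strict floor/ceil bounds at fractional cells
    have hfloor_lt : ∀ p ∈ F, ((⌊W p.1 p.2⌋ : ℝ)) < W p.1 p.2 := by
      intro p hp
      refine lt_of_le_of_ne (Int.floor_le _) fun h => ((hmemF p).mp hp) ⟨⌊W p.1 p.2⌋, h.symm⟩
    have hlt_ceil : ∀ p ∈ F, W p.1 p.2 < ((⌈W p.1 p.2⌉ : ℝ)) := by
      intro p hp
      exact lt_of_le_of_ne (Int.le_ceil _) fun h => ((hmemF p).mp hp) ⟨⌈W p.1 p.2⌉, h⟩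
    set tfun : Fin n × Fin n → ℝ := fun p =>
      if 0 < g p then (((⌈W p.1 p.2⌉ : ℝ)) - W p.1 p.2) / g p
      else (W p.1 p.2 - ((⌊W p.1 p.2⌋ : ℝ))) / (-(g p)) with htfun
    have htpos : ∀ p ∈ S, 0 < tfun p := by
      intro p hp
      obtain ⟨hpF, hpg⟩ := mem_filter.mp hp
      rcases lt_or_gt_of_ne hpg with hneg | hpos
      · rw [htfun]
        simp only [if_neg (not_lt.mpr hneg.le)]
        exact div_pos (by linarith [hfloor_lt p hpF]) (by linarith)
      · rw [htfun]
        simp only [if_pos hpos]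
        exact div_pos (by linarith [hlt_ceil p hpF]) hpos
    obtain ⟨p0, hp0S, hp0min⟩ := Finset.exists_min_image S tfun hSne
    set t := tfun p0 with htdef
    have ht : 0 < t := htpos p0 hp0S
    set W1 : Fin n → Fin n → ℝ := fun i j => W i j + t * g (i, j) with hW1
    -- bounds for W1
    have hbounds : ∀ i j, ((⌊W i j⌋ : ℝ)) ≤ W1 i j ∧ W1 i j ≤ ((⌈W i j⌉ : ℝ)) := by
      intro i j
      rcases lt_trichotomy (g (i, j)) 0 with hneg | hzero | hpos
      · have hmem : (i, j) ∈ S := mem_filter.mpr ⟨hgF _ hneg.ne, hneg.ne⟩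
        have hts : t ≤ tfun (i, j) := hp0min _ hmem
        have htf : tfun (i, j) = (W i j - ((⌊W i j⌋ : ℝ))) / (-(g (i, j))) := by
          rw [htfun]; simp only [if_neg (not_lt.mpr hneg.le)]
        constructor
        · have h1 : t * (-(g (i, j))) ≤ W i j - ((⌊W i j⌋ : ℝ)) := by
            rw [htf] at hts
            calc t * (-(g (i, j)))
                ≤ ((W i j - ((⌊W i j⌋ : ℝ))) / (-(g (i, j)))) * (-(g (i, j))) :=
                  mul_le_mul_of_nonneg_right hts (by linarith)
              _ = W i j - ((⌊W i j⌋ : ℝ)) := div_mul_cancel₀ _ (by linarith)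
          simp only [hW1]
          nlinarith
        · have h1 : t * g (i, j) ≤ 0 := mul_nonpos_of_nonneg_of_nonpos ht.le hneg.le
          have := Int.le_ceil (W i j)
          simp only [hW1]
          linarith
      · simp only [hW1, hzero, mul_zero, add_zero]
        exact ⟨Int.floor_le _, Int.le_ceil _⟩
      · have hmem : (i, j) ∈ S := mem_filter.mpr ⟨hgF _ hpos.ne', hpos.ne'⟩
        have hts : t ≤ tfun (i, j) := hp0min _ hmem
        have htf : tfun (i, j) = (((⌈W i j⌉ : ℝ)) - W i j) / g (i, j) := by
          rw [htfun]; simp only [if_pos hpos]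
        constructor
        · have h1 : 0 ≤ t * g (i, j) := mul_nonneg ht.le hpos.le
          have := Int.floor_le (W i j)
          simp only [hW1]
          linarith
        · have h1 : t * g (i, j) ≤ ((⌈W i j⌉ : ℝ)) - W i j := by
            rw [htf] at hts
            calc t * g (i, j)
                ≤ ((((⌈W i j⌉ : ℝ)) - W i j) / g (i, j)) * g (i, j) :=
                  mul_le_mul_of_nonneg_right hts hpos.le
              _ = ((⌈W i j⌉ : ℝ)) - W i j := div_mul_cancel₀ _ hpos.ne'
          simp only [hW1]
          linarith
    -- cells that are still fractional in W1
    have hstep : ∀ p : Fin n × Fin n, ¬ IsIntR (W1 p.1 p.2) → p ∈ F ∧ p ≠ p0 := by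
      intro p hp
      constructor
      · by_contra hpF
        have hgp : g p = 0 := dif_neg hpF
        apply hp
        have : IsIntR (W p.1 p.2) := not_not.mp (fun h => hpF ((hmemF p).mpr h))
        simpa only [hW1, hgp, mul_zero, add_zero] using this
      · rintro rfl
        apply hp
        have hg0 : g p ≠ 0 := (mem_filter.mp hp0S).2
        rcases lt_or_gt_of_ne hg0 with hneg | hpos
        · refine ⟨⌊W p.1 p.2⌋, ?_⟩
          have htf : t = (W p.1 p.2 - ((⌊W p.1 p.2⌋ : ℝ))) / (-(g p)) := by
            rw [htdef, htfun]; simp only [if_neg (not_lt.mpr hneg.le)]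
          show W p.1 p.2 + t * g p = _
          rw [htf, div_mul_eq_mul_div, mul_div_assoc, div_neg, div_self hneg.ne]
          ring
        · refine ⟨⌈W p.1 p.2⌉, ?_⟩
          have htf : t = (((⌈W p.1 p.2⌉ : ℝ)) - W p.1 p.2) / g p := by
            rw [htdef, htfun]; simp only [if_pos hpos]
          show W p.1 p.2 + t * g p = _
          rw [htf]
          field_simp
          ring
    have hcard1 : (univ.filter (fun c : Fin n × Fin n => ¬ IsIntR (W1 c.1 c.2))).card ≤ k := by
      have hsub : (univ.filter (fun c : Fin n × Fin n => ¬ IsIntR (W1 c.1 c.2))) ⊆ F.erase p0 := by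
        intro p hp
        obtain ⟨h1, h2⟩ := hstep p (mem_filter.mp hp).2
        exact Finset.mem_erase.mpr ⟨h2, h1⟩
      calc _ ≤ (F.erase p0).card := Finset.card_le_card hsub
        _ = F.card - 1 := Finset.card_erase_of_mem (hSF p0 hp0S)
        _ ≤ k := by omega
    -- W1 satisfies all the hypotheses
    have hnonneg1 : ∀ i j, 0 ≤ W1 i j := by
      intro i j
      have h0 : (0 : ℝ) ≤ ((⌊W i j⌋ : ℝ)) := by
        exact_mod_cast Int.floor_nonneg.mpr (hnonneg i j)
      linarith [(hbounds i j).1]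
    have hrow1 : ∀ i, ∑ j, W1 i j = (u i : ℝ) := by
      intro i
      simp only [hW1]
      rw [Finset.sum_add_distrib, ← Finset.mul_sum, hgrow i, mul_zero, add_zero, hrow i]
    have hcol1 : ∀ i, ∑ l, W1 l i = (u i : ℝ) := by
      intro i
      simp only [hW1]
      rw [Finset.sum_add_distrib, ← Finset.mul_sum, hgcol i, mul_zero, add_zero, hcol i]
    obtain ⟨Wstar, hb, hr, hc⟩ := ih W1 u hnonneg1 hrow1 hcol1 hcard1
    refine ⟨Wstar, ?_, hr, hc⟩
    intro i j
    obtain ⟨hb1, hb2⟩ := hb i j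
    obtain ⟨hlo, hhi⟩ := hbounds i j
    constructor
    · exact le_trans hb1 (Int.ceil_le.mpr hhi)
    · exact le_trans (Int.le_floor.mpr hlo) hb2

theorem integer_balancing_by_rounding {n : ℕ} (W : Fin n → Fin n → ℝ)
    (u : Fin n → ℤ)
    (hnonneg : ∀ i j, 0 ≤ W i j)
    (hrow : ∀ i, ∑ j, W i j = (u i : ℝ))
    (hcol : ∀ i, ∑ k, W k i = (u i : ℝ)) :
    ∃ Wstar : Fin n → Fin n → ℕ,
      (∀ i j, ((Wstar i j : ℤ) ≤ ⌈W i j⌉ ∧ ⌊W i j⌋ ≤ (Wstar i j : ℤ))) ∧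
      (∀ i, ∑ j, (Wstar i j : ℝ) = (u i : ℝ)) ∧
      (∀ i, ∑ k, (Wstar k i : ℝ) = (u i : ℝ)) := by
  classical
  exact key_induction (univ.filter (fun c : Fin n × Fin n => ¬ IsIntR (W c.1 c.2))).card
    W u hnonneg hrow hcol (le_refl _)
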